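/- Let N be a real number, m a natural number, and f : ℂ → ℂ an entire function. Set ψ₀(z) = f(z)·(1+|z|²)^{-N} and define ψ = D*_{N-m}(D*_{N-m+1}(··· D*_{N-1}(ψ₀)···)) (the composition of the m raising operators D*_{N-1}, …, D*_{N-m} applied to ψ₀). Then L_{N-m} ψ = N(N+1) ψ. In particular, writing q = 2(N-m), ψ is an eigenfunction of the Dirac monopole Hamiltonian H_q = L_{N-m} - (N-m)² with charge q at the eigenvalue λ = (2m+1)(q/2) + m(m+1). -/

import Mathlib

open Complex ComplexConjugate MeasureTheory

noncomputable section

/-- Partial derivative in the x-direction (identifying ℂ with ℝ²). -/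
def pdx (f : ℂ → ℂ) (z : ℂ) : ℂ := fderiv ℝ f z 1

/-- Partial derivative in the y-direction. -/
def pdy (f : ℂ → ℂ) (z : ℂ) : ℂ := fderiv ℝ f z Complex.I

/-- Wirtinger derivative ∂ = (∂ₓ - i ∂_y)/2. -/
def wd (f : ℂ → ℂ) (z : ℂ) : ℂ := (pdx f z - Complex.I * pdy f z) / 2

/-- Wirtinger derivative ∂̄ = (∂ₓ + i ∂_y)/2. -/
def wdb (f : ℂ → ℂ) (z : ℂ) : ℂ := (pdx f z + Complex.I * pdy f z) / 2

/-- Lowering operator D_N ψ = (1+|z|²)∂̄ψ + Nzψ. -/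
def DN (N : ℝ) (ψ : ℂ → ℂ) (z : ℂ) : ℂ :=
  (1 + z * conj z) * wdb ψ z + (N : ℂ) * z * ψ z

/-- Raising operator D_N* ψ = -(1+|z|²)∂ψ + (N+1)z̄ψ. -/
def DNs (N : ℝ) (ψ : ℂ → ℂ) (z : ℂ) : ℂ :=
  -(1 + z * conj z) * wd ψ z + ((N : ℂ) + 1) * conj z * ψ z

/-- Dirac monopole operator
L_N ψ = -(1+|z|²)²∂∂̄ψ - Nz(1+|z|²)∂ψ + Nz̄(1+|z|²)∂̄ψ + N²(1+|z|²)ψ. -/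
def LN (N : ℝ) (ψ : ℂ → ℂ) (z : ℂ) : ℂ :=
  -(1 + z * conj z)^2 * wd (wdb ψ) z
    - (N : ℂ) * z * (1 + z * conj z) * wd ψ z
    + (N : ℂ) * conj z * (1 + z * conj z) * wdb ψ z
    + (N : ℂ)^2 * (1 + z * conj z) * ψ z

/-- The chain of raising operators: ψ₀ ↦ D*_{N-m}(D*_{N-m+1}(··· D*_{N-1}(ψ₀)···)). -/
def raiseChain (N : ℝ) (ψ0 : ℂ → ℂ) : ℕ → ℂ → ℂ
  | 0 => ψ0
  | k + 1 => fun z => DNs (N - ((k : ℝ) + 1)) (raiseChain N ψ0 k) z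

/-! ### Auxiliary lemmas -/

section Aux

variable {f g ψ φ₁ φ₂ : ℂ → ℂ} {z : ℂ}

lemma wd_add (hf : DifferentiableAt ℝ f z) (hg : DifferentiableAt ℝ g z) :
    wd (fun w => f w + g w) z = wd f z + wd g z := by
  simp [wd, pdx, pdy, fderiv_fun_add hf hg]; ring

lemma wdb_add (hf : DifferentiableAt ℝ f z) (hg : DifferentiableAt ℝ g z) :
    wdb (fun w => f w + g w) z = wdb f z + wdb g z := by
  simp [wdb, pdx, pdy, fderiv_fun_add hf hg]; ring

lemma wd_mul (hf : DifferentiableAt ℝ f z) (hg : DifferentiableAt ℝ g z) :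
    wd (fun w => f w * g w) z = wd f z * g z + f z * wd g z := by
  simp [wd, pdx, pdy, fderiv_fun_mul hf hg, smul_eq_mul]; ring

lemma wdb_mul (hf : DifferentiableAt ℝ f z) (hg : DifferentiableAt ℝ g z) :
    wdb (fun w => f w * g w) z = wdb f z * g z + f z * wdb g z := by
  simp [wdb, pdx, pdy, fderiv_fun_mul hf hg, smul_eq_mul]; ring

lemma wd_const (c : ℂ) : wd (fun _ => c) z = 0 := by
  simp [wd, pdx, pdy]

lemma wdb_const (c : ℂ) : wdb (fun _ => c) z = 0 := by
  simp [wdb, pdx, pdy]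

lemma wd_const_mul (c : ℂ) (hf : DifferentiableAt ℝ f z) :
    wd (fun w => c * f w) z = c * wd f z := by
  simp [wd, pdx, pdy, fderiv_const_mul hf, smul_eq_mul]; ring

lemma wdb_const_mul (c : ℂ) (hf : DifferentiableAt ℝ f z) :
    wdb (fun w => c * f w) z = c * wdb f z := by
  simp [wdb, pdx, pdy, fderiv_const_mul hf, smul_eq_mul]; ring

lemma wd_id : wd (fun w => w) z = 1 := by
  simp [wd, pdx, pdy, fderiv_id']

lemma wdb_id : wdb (fun w => w) z = 0 := by
  simp [wdb, pdx, pdy, fderiv_id']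

lemma conj_contDiff : ContDiff ℝ ⊤ (fun w : ℂ => conj w) := Complex.conjCLE.contDiff

lemma hasFDerivAt_conj (z : ℂ) :
    HasFDerivAt (fun w : ℂ => conj w) ((Complex.conjCLE : ℂ ≃L[ℝ] ℂ) : ℂ →L[ℝ] ℂ) z :=
  ((Complex.conjCLE : ℂ ≃L[ℝ] ℂ) : ℂ →L[ℝ] ℂ).hasFDerivAt

lemma wd_conj : wd (fun w => conj w) z = 0 := by
  simp [wd, pdx, pdy, (hasFDerivAt_conj z).fderiv]

lemma wdb_conj : wdb (fun w => conj w) z = 1 := by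
  simp [wdb, pdx, pdy, (hasFDerivAt_conj z).fderiv]

lemma fderiv_apply_contDiff (h : ContDiff ℝ ⊤ ψ) (v : ℂ) :
    ContDiff ℝ ⊤ (fun z => fderiv ℝ ψ z v) :=
  (ContinuousLinearMap.apply ℝ ℂ v).contDiff.comp (h.fderiv_right le_top)

lemma wd_contDiff (h : ContDiff ℝ ⊤ ψ) : ContDiff ℝ ⊤ (wd ψ) := by
  unfold wd pdx pdy
  exact ((fderiv_apply_contDiff h 1).sub
    (contDiff_const.mul (fderiv_apply_contDiff h I))).div_const 2

lemma wdb_contDiff (h : ContDiff ℝ ⊤ ψ) : ContDiff ℝ ⊤ (wdb ψ) := by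
  unfold wdb pdx pdy
  exact ((fderiv_apply_contDiff h 1).add
    (contDiff_const.mul (fderiv_apply_contDiff h I))).div_const 2

lemma pd_comb (v c : ℂ) (h₁ : DifferentiableAt ℝ φ₁ z) (h₂ : DifferentiableAt ℝ φ₂ z) :
    fderiv ℝ (fun w => (φ₁ w + c * φ₂ w) / 2) z v
      = (fderiv ℝ φ₁ z v + c * fderiv ℝ φ₂ z v) / 2 := by
  have : (fun w => (φ₁ w + c * φ₂ w) / 2) = fun w => (φ₁ w + c * φ₂ w) * (2:ℂ)⁻¹ :=
    funext fun w => div_eq_mul_inv _ _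
  rw [this, fderiv_mul_const (show DifferentiableAt ℝ (fun w => φ₁ w + c * φ₂ w) z from
      h₁.add (h₂.const_mul c)), fderiv_fun_add h₁ (h₂.const_mul c),
    fderiv_const_mul h₂]
  simp [smul_eq_mul]; rw [div_eq_inv_mul, mul_add]

lemma pdx_pdy_symm (h : ContDiff ℝ ⊤ ψ) :
    pdx (pdy ψ) z = pdy (pdx ψ) z := by
  have hd : ∀ y, HasFDerivAt ψ (fderiv ℝ ψ y) y :=
    fun y => (h.differentiable (by simp) y).hasFDerivAt
  have hF : HasFDerivAt (fderiv ℝ ψ) (fderiv ℝ (fderiv ℝ ψ) z) z :=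
    ((h.fderiv_right (m := ⊤) (le_top)).differentiable (by simp) z).hasFDerivAt
  have sym := second_derivative_symmetric hd hF 1 I
  have e1 : pdx (pdy ψ) z = fderiv ℝ (fderiv ℝ ψ) z 1 I := by
    unfold pdx pdy
    have : HasFDerivAt (fun w => fderiv ℝ ψ w I)
        ((ContinuousLinearMap.apply ℝ ℂ (I:ℂ)).comp (fderiv ℝ (fderiv ℝ ψ) z)) z :=
      (ContinuousLinearMap.apply ℝ ℂ (I:ℂ)).hasFDerivAt.comp z hF
    rw [this.fderiv]; rfl
  have e2 : pdy (pdx ψ) z = fderiv ℝ (fderiv ℝ ψ) z I 1 := by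
    unfold pdx pdy
    have : HasFDerivAt (fun w => fderiv ℝ ψ w 1)
        ((ContinuousLinearMap.apply ℝ ℂ (1:ℂ)).comp (fderiv ℝ (fderiv ℝ ψ) z)) z :=
      (ContinuousLinearMap.apply ℝ ℂ (1:ℂ)).hasFDerivAt.comp z hF
    rw [this.fderiv]; rfl
  rw [e1, e2, sym]

lemma wdb_wd_symm (h : ContDiff ℝ ⊤ ψ) : wdb (wd ψ) z = wd (wdb ψ) z := by
  have hx : ContDiff ℝ ⊤ (pdx ψ) := fderiv_apply_contDiff h 1
  have hy : ContDiff ℝ ⊤ (pdy ψ) := fderiv_apply_contDiff h I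
  have hwd : wd ψ = fun w => (pdx ψ w + (-I) * pdy ψ w) / 2 :=
    funext fun w => by unfold wd; ring
  have hwdb : wdb ψ = fun w => (pdx ψ w + I * pdy ψ w) / 2 := rfl
  have hdx := hx.differentiable (by simp) z
  have hdy := hy.differentiable (by simp) z
  have exx : pdx (wd ψ) z = (pdx (pdx ψ) z + (-I) * pdx (pdy ψ) z) / 2 := by
    rw [hwd]; exact pd_comb 1 (-I) hdx hdy
  have exy : pdy (wd ψ) z = (pdy (pdx ψ) z + (-I) * pdy (pdy ψ) z) / 2 := by
    rw [hwd]; exact pd_comb I (-I) hdx hdy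
  have ebx : pdx (wdb ψ) z = (pdx (pdx ψ) z + I * pdx (pdy ψ) z) / 2 := by
    rw [hwdb]; exact pd_comb 1 I hdx hdy
  have eby : pdy (wdb ψ) z = (pdy (pdx ψ) z + I * pdy (pdy ψ) z) / 2 := by
    rw [hwdb]; exact pd_comb I I hdx hdy
  have sym := pdx_pdy_symm h (z := z)
  unfold wdb wd at *
  rw [exx, exy, ebx, eby, sym]
  ring

/-! ### The weight functions Sa a = (1+|z|²)^a -/

def Sa (a : ℝ) : ℂ → ℂ := fun z => (((1 + Complex.normSq z) ^ a : ℝ) : ℂ)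

lemma onePlusNormSq_pos (z : ℂ) : 0 < 1 + Complex.normSq z := by
  have := Complex.normSq_nonneg z; linarith

lemma hasFDerivAt_one_add_normSq (z : ℂ) :
    HasFDerivAt (fun w : ℂ => 1 + Complex.normSq w)
      (((2 * z.re) • Complex.reCLM + (2 * z.im) • Complex.imCLM : ℂ →L[ℝ] ℝ)) z := by
  have hr := Complex.reCLM.hasFDerivAt (x := z)
  have hi := Complex.imCLM.hasFDerivAt (x := z)
  have h1 := ((hr.mul hr).add (hi.mul hi)).const_add (1:ℝ)
  have e1 : (fun w : ℂ => 1 + Complex.normSq w)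
      = fun w : ℂ => 1 + (Complex.reCLM w * Complex.reCLM w
        + Complex.imCLM w * Complex.imCLM w) := by
    funext w; simp [Complex.normSq_apply]
  rw [e1]
  exact h1.congr_fderiv (by ext w; simp; ring)

lemma hasFDerivAt_Sa (a : ℝ) (z : ℂ) :
    HasFDerivAt (Sa a)
      (Complex.ofRealCLM.comp ((a * (1 + Complex.normSq z) ^ (a - 1)) •
        (((2 * z.re) • Complex.reCLM + (2 * z.im) • Complex.imCLM : ℂ →L[ℝ] ℝ)))) z := by
  have h2 : HasDerivAt (fun t : ℝ => t ^ a) (a * (1 + Complex.normSq z) ^ (a - 1))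
      (1 + Complex.normSq z) := by
    have := Real.hasDerivAt_rpow_const (x := 1 + Complex.normSq z) (p := a)
      (Or.inl (onePlusNormSq_pos z).ne')
    simpa [mul_comm] using this
  have h3 := h2.comp_hasFDerivAt z (hasFDerivAt_one_add_normSq z)
  exact Complex.ofRealCLM.hasFDerivAt.comp z h3

lemma wd_Sa (a : ℝ) (z : ℂ) : wd (Sa a) z = (a : ℂ) * Sa (a - 1) z * conj z := by
  unfold wd pdx pdy
  rw [(hasFDerivAt_Sa a z).fderiv]
  simp [Sa, Complex.ext_iff]
  constructor <;> ring

lemma wdb_Sa (a : ℝ) (z : ℂ) : wdb (Sa a) z = (a : ℂ) * Sa (a - 1) z * z := by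
  unfold wdb pdx pdy
  rw [(hasFDerivAt_Sa a z).fderiv]
  simp [Sa, Complex.ext_iff]
  constructor <;> ring

lemma Sa_contDiff (a : ℝ) : ContDiff ℝ ⊤ (Sa a) := by
  apply Complex.ofRealCLM.contDiff.comp
  have hns : ContDiff ℝ ⊤ (fun w : ℂ => 1 + Complex.normSq w) := by
    have : (fun w : ℂ => 1 + Complex.normSq w)
        = fun w : ℂ => 1 + (Complex.reCLM w * Complex.reCLM w
          + Complex.imCLM w * Complex.imCLM w) := by
      funext w; simp [Complex.normSq_apply]
    rw [this]
    exact contDiff_const.add ((Complex.reCLM.contDiff.mul Complex.reCLM.contDiff).add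
      (Complex.imCLM.contDiff.mul Complex.imCLM.contDiff))
  apply contDiff_iff_contDiffAt.2 fun z => ?_
  exact hns.contDiffAt.rpow_const_of_ne (onePlusNormSq_pos z).ne'

lemma Sa_step (a : ℝ) (z : ℂ) : (1 + z * conj z) * Sa (a - 1) z = Sa a z := by
  rw [Complex.mul_conj]
  unfold Sa
  rw [show (a : ℝ) = (a - 1) + 1 by ring, Real.rpow_add (onePlusNormSq_pos z)]
  push_cast [Real.rpow_one]
  ring

lemma wdb_holo (hf : DifferentiableAt ℂ f z) : wdb f z = 0 := by
  unfold wdb pdx pdy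
  rw [hf.fderiv_restrictScalars ℝ]
  simp only [ContinuousLinearMap.coe_restrictScalars']
  rw [show (fderiv ℂ f z) I = I * fderiv ℂ f z 1 by
    rw [show (I : ℂ) = I • (1:ℂ) by simp, ContinuousLinearMap.map_smul]; simp [smul_eq_mul]]
  change (deriv f z + I * (I * deriv f z)) / 2 = 0
  have : I * (I * deriv f z) = -deriv f z := by
    rw [← mul_assoc, Complex.I_mul_I]; ring
  rw [this]; ring

end Aux

/-! ### Operator identities -/

section Op

variable {ψ ψ0 f : ℂ → ℂ} {z : ℂ}

lemma Q_contDiff : ContDiff ℝ ⊤ (fun w : ℂ => 1 + w * conj w) :=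
  contDiff_const.add (contDiff_id.mul conj_contDiff)

lemma wd_Q (z : ℂ) : wd (fun w : ℂ => 1 + w * conj w) z = conj z := by
  rw [wd_add (differentiableAt_const _)
    (show DifferentiableAt ℝ (fun w : ℂ => w * conj w) z from
      differentiableAt_fun_id.mul ((conj_contDiff.differentiable (by simp)) z)),
    wd_const, wd_mul differentiableAt_fun_id ((conj_contDiff.differentiable (by simp)) z),
    wd_id, wd_conj]
  ring

lemma wdb_Q (z : ℂ) : wdb (fun w : ℂ => 1 + w * conj w) z = z := by
  rw [wdb_add (differentiableAt_const _)
    (show DifferentiableAt ℝ (fun w : ℂ => w * conj w) z from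
      differentiableAt_fun_id.mul ((conj_contDiff.differentiable (by simp)) z)),
    wdb_const, wdb_mul differentiableAt_fun_id ((conj_contDiff.differentiable (by simp)) z),
    wdb_id, wdb_conj]
  ring

lemma DNs_contDiff (K : ℝ) (h : ContDiff ℝ ⊤ ψ) : ContDiff ℝ ⊤ (DNs K ψ) := by
  show ContDiff ℝ ⊤ (fun z => -(1 + z * conj z) * wd ψ z + ((K:ℂ) + 1) * conj z * ψ z)
  exact ((Q_contDiff.neg).mul (wd_contDiff h)).add
    (((contDiff_const.mul conj_contDiff)).mul h)

lemma DNs_smul (K : ℝ) (c : ℂ) (hφ : DifferentiableAt ℝ ψ z) :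
    DNs K (fun w => c * ψ w) z = c * DNs K ψ z := by
  simp only [DNs, wd_const_mul c hφ]; ring

/-- Key identity A: D_K* D_K = L_K - K(K+1). -/
lemma DNs_DN (K : ℝ) (h : ContDiff ℝ ⊤ ψ) (z : ℂ) :
    DNs K (DN K ψ) z = LN K ψ z - (K:ℂ) * ((K:ℂ) + 1) * ψ z := by
  have hψd := h.differentiable (by simp)
  have hwdb := wdb_contDiff h
  have hQd : DifferentiableAt ℝ (fun w : ℂ => 1 + w * conj w) z :=
    (Q_contDiff.differentiable (by simp)) z
  have d1 : DifferentiableAt ℝ (fun w => (1 + w * conj w) * wdb ψ w) z :=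
    hQd.mul ((hwdb.differentiable (by simp)) z)
  have d2 : DifferentiableAt ℝ (fun w => (K:ℂ) * w * ψ w) z :=
    ((differentiableAt_fun_id.const_mul _)).mul (hψd z)
  have e0 : wd (DN K ψ) z
      = wd (fun w => (1 + w * conj w) * wdb ψ w) z + wd (fun w => (K:ℂ) * w * ψ w) z :=
    wd_add d1 d2
  have e1 : wd (fun w => (1 + w * conj w) * wdb ψ w) z
      = conj z * wdb ψ z + (1 + z * conj z) * wd (wdb ψ) z := by
    rw [wd_mul hQd ((hwdb.differentiable (by simp)) z), wd_Q]
  have e2 : wd (fun w => (K:ℂ) * w * ψ w) z = (K:ℂ) * ψ z + (K:ℂ) * z * wd ψ z := by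
    rw [wd_mul (differentiableAt_fun_id.const_mul _) (hψd z)]
    have : wd (fun w => (K:ℂ) * w) z = (K:ℂ) := by
      rw [wd_const_mul _ differentiableAt_fun_id, wd_id]; ring
    rw [this]
  simp only [DNs, DN, LN]
  rw [e0, e1, e2]
  ring

/-- Key identity B: D_K D_K* = L_{K+1} - K(K+1). -/
lemma DN_DNs (K : ℝ) (h : ContDiff ℝ ⊤ ψ) (z : ℂ) :
    DN K (DNs K ψ) z = LN (K + 1) ψ z - (K:ℂ) * ((K:ℂ) + 1) * ψ z := by
  have hψd := h.differentiable (by simp)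
  have hwd := wd_contDiff h
  have hconjd : DifferentiableAt ℝ (fun w : ℂ => conj w) z :=
    (conj_contDiff.differentiable (by simp)) z
  have hQnd : DifferentiableAt ℝ (fun w : ℂ => -(1 + w * conj w)) z :=
    ((Q_contDiff.differentiable (by simp)) z).neg
  have d1 : DifferentiableAt ℝ (fun w => -(1 + w * conj w) * wd ψ w) z :=
    hQnd.mul ((hwd.differentiable (by simp)) z)
  have d2 : DifferentiableAt ℝ (fun w => ((K:ℂ) + 1) * conj w * ψ w) z :=
    (hconjd.const_mul _).mul (hψd z)
  have e0 : wdb (DNs K ψ) z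
      = wdb (fun w => -(1 + w * conj w) * wd ψ w) z
        + wdb (fun w => ((K:ℂ) + 1) * conj w * ψ w) z :=
    wdb_add d1 d2
  have eQn : wdb (fun w : ℂ => -(1 + w * conj w)) z = -z := by
    have : (fun w : ℂ => -(1 + w * conj w)) = fun w : ℂ => (-1 : ℂ) * (1 + w * conj w) := by
      funext w; ring
    rw [this, wdb_const_mul _ ((Q_contDiff.differentiable (by simp)) z), wdb_Q]; ring
  have e1 : wdb (fun w => -(1 + w * conj w) * wd ψ w) z
      = -z * wd ψ z + -(1 + z * conj z) * wd (wdb ψ) z := by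
    rw [wdb_mul hQnd ((hwd.differentiable (by simp)) z), eQn, wdb_wd_symm h]
  have e2 : wdb (fun w => ((K:ℂ) + 1) * conj w * ψ w) z
      = ((K:ℂ) + 1) * ψ z + ((K:ℂ) + 1) * conj z * wdb ψ z := by
    rw [wdb_mul (hconjd.const_mul _) (hψd z)]
    have : wdb (fun w => ((K:ℂ) + 1) * conj w) z = (K:ℂ) + 1 := by
      rw [wdb_const_mul _ hconjd, wdb_conj]; ring
    rw [this]
  simp only [DN, DNs, LN]
  rw [e0, e1, e2]
  push_cast
  ring

end Op

/-! ### The ground state and the chain -/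

section Chain

variable {f ψ0 : ℂ → ℂ}

lemma DN_psi0 (N : ℝ) (hf : Differentiable ℂ f) (z : ℂ) :
    DN N (fun w => f w * Sa (-N) w) z = 0 := by
  have hfd : DifferentiableAt ℝ f z := (hf z).restrictScalars ℝ
  have hSd : DifferentiableAt ℝ (Sa (-N)) z := ((Sa_contDiff (-N)).differentiable (by simp)) z
  have e : wdb (fun w => f w * Sa (-N) w) z
      = f z * (((-N : ℝ) : ℂ) * Sa (-N - 1) z * z) := by
    rw [wdb_mul hfd hSd, wdb_holo (hf z), wdb_Sa]
    ring
  have hm : (1 + z * conj z) * Sa (-N - 1) z = Sa (-N) z := by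
    have := Sa_step (-N) z
    simpa using this
  simp only [DN, e]
  push_cast
  linear_combination (-(N:ℂ) * f z * z) * hm

lemma DNs_zero (K : ℝ) (z : ℂ) : DNs K (fun _ => (0:ℂ)) z = 0 := by
  simp [DNs, wd_const]

lemma chain_eigen (N : ℝ) (ψ0 : ℂ → ℂ) (hs : ContDiff ℝ ⊤ ψ0)
    (h0 : ∀ z, DN N ψ0 z = 0) (k : ℕ) :
    ContDiff ℝ ⊤ (raiseChain N ψ0 k) ∧
      ∀ z, LN (N - (k : ℝ)) (raiseChain N ψ0 k) z
        = (N : ℂ) * ((N : ℂ) + 1) * raiseChain N ψ0 k z := by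
  induction k with
  | zero =>
    refine ⟨hs, fun z => ?_⟩
    have hA := DNs_DN N hs z
    have hz : DN N ψ0 = fun _ => (0:ℂ) := funext h0
    rw [hz, DNs_zero] at hA
    simp only [raiseChain, Nat.cast_zero, sub_zero]
    linear_combination -hA
  | succ k ih =>
    obtain ⟨hsk, hek⟩ := ih
    set K : ℝ := N - ((k : ℝ) + 1) with hKdef
    have hK1 : K + 1 = N - (k : ℝ) := by rw [hKdef]; ring
    have hET : raiseChain N ψ0 (k + 1) = DNs K (raiseChain N ψ0 k) := rfl
    have hsk1 : ContDiff ℝ ⊤ (raiseChain N ψ0 (k + 1)) := by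
      rw [hET]; exact DNs_contDiff K hsk
    refine ⟨hsk1, fun z => ?_⟩
    have hB : DN K (DNs K (raiseChain N ψ0 k))
        = fun w => ((N : ℂ) * ((N : ℂ) + 1) - (K:ℂ) * ((K:ℂ) + 1)) * raiseChain N ψ0 k w := by
      funext w
      have := DN_DNs K hsk w
      rw [hK1] at this
      rw [this, hek w]
      ring
    have hA := DNs_DN K hsk1 z
    rw [hET] at hA
    rw [hB, DNs_smul K _ ((hsk.differentiable (by simp)) z)] at hA
    have hcast : N - ((k + 1 : ℕ) : ℝ) = K := by rw [hKdef]; push_cast; ring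
    rw [hcast, hET]
    linear_combination -hA
end Chain


/-- applying m raising operators to ψ₀ = f·(1+|z|²)^{-N} (f entire)
gives an eigenfunction of L_{N-m} with eigenvalue N(N+1); equivalently an
eigenfunction of the monopole Hamiltonian H_q = L_{N-m} - (N-m)², q = 2(N-m),
with eigenvalue (2m+1)(q/2) + m(m+1). -/
theorem raised_ground_states_are_eigenfunctions
    (N : ℝ) (m : ℕ) (f : ℂ → ℂ) (hf : Differentiable ℂ f) :
    let ψ0 : ℂ → ℂ := fun z => f z * ((((1 + Complex.normSq z) ^ (-N) : ℝ)) : ℂ)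
    let ψ : ℂ → ℂ := raiseChain N ψ0 m
    ∀ z : ℂ,
      LN (N - (m : ℝ)) ψ z = (N : ℂ) * ((N : ℂ) + 1) * ψ z ∧
      LN (N - (m : ℝ)) ψ z - ((N : ℂ) - (m : ℂ))^2 * ψ z
        = ((2 * (m : ℂ) + 1) * ((2 * ((N : ℂ) - (m : ℂ))) / 2)
            + (m : ℂ) * ((m : ℂ) + 1)) * ψ z := by
  intro ψ0 ψ z
  have hs : ContDiff ℝ ⊤ ψ0 :=
    (hf.contDiff.restrict_scalars ℝ).mul (Sa_contDiff (-N))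
  have h0 : ∀ w, DN N ψ0 w = 0 := fun w => DN_psi0 N hf w
  obtain ⟨-, he⟩ := chain_eigen N ψ0 hs h0 m
  have h1 := he z
  refine ⟨h1, ?_⟩
  rw [h1]
  ring
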